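/- Let 0 < ν < 1, M = [[ν,1],[0,ν]] (a 2×2 Jordan block), u = (0,1), and define T_a(v) = Mv + a·u for a ∈ {−1,+1}. Then for any sequence (a_i) ∈ {−1,+1}^ℕ, the limit lim_{n→∞} T_{a_0} ∘ T_{a_1} ∘ ⋯ ∘ T_{a_n}(0,0) exists and equals (Σ_{i≥1} i·a_i·ν^{i−1}, Σ_{i≥0} a_i·ν^i). -/

import Mathlib

/-- The Jordan block map `T_a(v) = Mv + a·(0,1)` with `M = [[ν,1],[0,ν]]`. -/
def jordanMap (ν : ℝ) (a : ℝ) (v : ℝ × ℝ) : ℝ × ℝ :=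
  (ν * v.1 + v.2, ν * v.2 + a)

/-- `T_{a_0} ∘ T_{a_1} ∘ ⋯ ∘ T_{a_n} (0,0)`. -/
def jordanIter (ν : ℝ) (a : ℕ → ℝ) (n : ℕ) : ℝ × ℝ :=
  (List.range (n + 1)).foldr (fun i v => jordanMap ν (a i) v) (0, 0)

lemma jordanIter_closed (ν : ℝ) : ∀ (n : ℕ) (a : ℕ → ℝ),
    jordanIter ν a n =
      (∑ i ∈ Finset.range (n + 1), (i : ℝ) * a i * ν ^ (i - 1),
       ∑ i ∈ Finset.range (n + 1), a i * ν ^ i) := by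
  intro n
  induction n with
  | zero =>
    intro a
    norm_num [jordanIter, jordanMap, List.range_succ]
  | succ n ih =>
    intro a
    have hshift : List.range (n + 2) = 0 :: (List.range (n + 1)).map Nat.succ :=
      List.range_succ_eq_map (n := n + 1)
    have : jordanIter ν a (n + 1) = jordanMap ν (a 0) (jordanIter ν (fun i => a (i + 1)) n) := by
      simp only [jordanIter, hshift, List.foldr_cons, List.foldr_map]
    rw [this, ih]
    simp only [jordanMap, Prod.mk.injEq]
    constructor
    · rw [Finset.sum_range_succ' (fun i => (i : ℝ) * a i * ν ^ (i - 1)) (n + 1)]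
      rw [Finset.mul_sum, ← Finset.sum_add_distrib]
      simp only [Nat.cast_zero, zero_mul, add_zero]
      apply Finset.sum_congr rfl
      intro i _
      have hkey : ν * ((i : ℝ) * a (i + 1) * ν ^ (i - 1)) = (i : ℝ) * a (i + 1) * ν ^ i := by
        rcases Nat.eq_zero_or_pos i with h | h
        · simp [h]
        · have hp : ν ^ (i - 1) * ν = ν ^ i := by rw [← pow_succ, Nat.sub_add_cancel h]
          rw [← hp]; ring
      rw [Nat.add_sub_cancel, hkey]
      push_cast
      ring
    · rw [Finset.sum_range_succ' (fun i => a i * ν ^ i) (n + 1)]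
      rw [Finset.mul_sum]
      simp only [pow_zero, mul_one, pow_succ]
      congr 1
      apply Finset.sum_congr rfl
      intro i _
      ring

theorem jordan_limit (ν : ℝ) (h0 : 0 < ν) (h1 : ν < 1)
    (a : ℕ → ℝ) (ha : ∀ i, a i = 1 ∨ a i = -1) :
    Filter.Tendsto (jordanIter ν a) Filter.atTop
      (nhds (∑' i : ℕ, (i : ℝ) * a i * ν ^ (i - 1), ∑' i : ℕ, a i * ν ^ i)) := by
  have habs : ∀ i, |a i| = 1 := by
    intro i; rcases ha i with h | h <;> simp [h]
  have hν : |ν| < 1 := by rw [abs_of_pos h0]; exact h1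
  have hsum2 : Summable fun i : ℕ => a i * ν ^ i := by
    apply Summable.of_abs
    apply Summable.of_nonneg_of_le (fun i => abs_nonneg _) (fun i => ?_)
      (summable_geometric_of_lt_one h0.le h1)
    rw [abs_mul, habs, one_mul, abs_pow, abs_of_pos h0]
  have hsum1 : Summable fun i : ℕ => (i : ℝ) * a i * ν ^ (i - 1) := by
    apply Summable.of_abs
    have hg : Summable fun i : ℕ => ν⁻¹ * ((i : ℝ) * ν ^ i) := by
      apply Summable.mul_left
      simpa using summable_pow_mul_geometric_of_norm_lt_one 1 (r := ν)
        (by rwa [Real.norm_eq_abs])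
    apply Summable.of_nonneg_of_le (fun i => abs_nonneg _) (fun i => ?_) hg
    rw [abs_mul, abs_mul, habs, mul_one, Nat.abs_cast, abs_pow, abs_of_pos h0]
    rcases Nat.eq_zero_or_pos i with h | h
    · simp [h]
    · rw [pow_sub₀ ν h0.ne' h, pow_one]
      exact le_of_eq (by ring)
  have h1' := hsum1.hasSum.tendsto_sum_nat
  have h2' := hsum2.hasSum.tendsto_sum_nat
  have key : Filter.Tendsto (fun n => jordanIter ν a n) Filter.atTop
      (nhds (∑' i : ℕ, (i : ℝ) * a i * ν ^ (i - 1), ∑' i : ℕ, a i * ν ^ i)) := by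
    simp only [jordanIter_closed ν _ a]
    exact Filter.Tendsto.prodMk_nhds
      (h1'.comp (Filter.tendsto_add_atTop_nat 1))
      (h2'.comp (Filter.tendsto_add_atTop_nat 1))
  exact key
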